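/- Let k be an algebraically closed field of characteristic 0, and let a, b ∈ kˣ be elements that are not roots of unity such that the subgroup {(m, n) ∈ ℤ² : aᵐ = bⁿ} of ℤ² is nontrivial; let (r₁, r₂) be a pair of positive integers generating this subgroup. Let (x₀, y₀) ∈ k² with x₀ y₀ ≠ 0. Then the Zariski closure in k² of the orbit {(aⁿ x₀, bⁿ y₀) : n ∈ ℕ} equals the zero locus {(x, y) ∈ k² : y₀^{r₂} x^{r₁} − x₀^{r₁} y^{r₂} = 0}. -/

import Mathlib

open MvPolynomial

lemma evalAeval' {k : Type*} [CommSemiring k] (v : Fin 2 → Polynomial k)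
    (g : MvPolynomial (Fin 2) k) (s : k) :
    (MvPolynomial.aeval v g).eval s = eval (fun i => (v i).eval s) g := by
  induction g using MvPolynomial.induction_on with
  | C c => simp
  | add p q hp hq => simp [hp, hq]
  | mul_X p i hp => simp [hp]

lemma exists_root' {k : Type*} [Field k] {m n : ℕ} (h : Nat.Coprime m n)
    {A B : k} (hA : A ≠ 0) (hB : B ≠ 0) (hAB : A ^ m = B ^ n) :
    ∃ s : k, s ^ n = A ∧ s ^ m = B := by
  obtain ⟨u, v, huv⟩ : IsCoprime (m : ℤ) (n : ℤ) := by
    rw [Int.isCoprime_iff_gcd_eq_one, Int.gcd_natCast_natCast]; exact h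
  set Au : kˣ := Units.mk0 A hA with hAu
  set Bu : kˣ := Units.mk0 B hB with hBu
  have hABu : Au ^ (m : ℤ) = Bu ^ (n : ℤ) := by
    ext; push_cast; simpa [hAu, hBu] using hAB
  have h1 : (Au ^ v * Bu ^ u) ^ (n : ℤ) = Au := by
    calc (Au ^ v * Bu ^ u) ^ (n : ℤ)
        = (Au ^ v) ^ (n : ℤ) * (Bu ^ (n : ℤ)) ^ u := by
          rw [mul_zpow]; congr 1; rw [← zpow_mul, ← zpow_mul, mul_comm]
      _ = (Au ^ v) ^ (n : ℤ) * (Au ^ (m : ℤ)) ^ u := by rw [hABu]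
      _ = Au ^ (v * (n : ℤ) + (m : ℤ) * u) := by
          rw [← zpow_mul, ← zpow_mul, ← zpow_add]
      _ = Au := by rw [show v * (n : ℤ) + (m : ℤ) * u = 1 by linarith, zpow_one]
  have h2 : (Au ^ v * Bu ^ u) ^ (m : ℤ) = Bu := by
    calc (Au ^ v * Bu ^ u) ^ (m : ℤ)
        = (Au ^ (m : ℤ)) ^ v * (Bu ^ u) ^ (m : ℤ) := by
          rw [mul_zpow]; congr 1; rw [← zpow_mul, ← zpow_mul, mul_comm]
      _ = (Bu ^ (n : ℤ)) ^ v * (Bu ^ u) ^ (m : ℤ) := by rw [hABu]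
      _ = Bu ^ ((n : ℤ) * v + u * (m : ℤ)) := by
          rw [← zpow_mul, ← zpow_mul, ← zpow_add]
      _ = Bu := by rw [show (n : ℤ) * v + u * (m : ℤ) = 1 by linarith, zpow_one]
  refine ⟨((Au ^ v * Bu ^ u : kˣ) : k), ?_, ?_⟩
  · rw [← Units.val_pow_eq_pow_val, ← zpow_natCast, h1]; simp [hAu]
  · rw [← Units.val_pow_eq_pow_val, ← zpow_natCast, h2]; simp [hBu]


/-- The Zariski closure of a subset of the plane: the common zero locus of all polynomials
vanishing on the subset. -/
def zariskiClosure {k : Type*} [Field k] (S : Set (Fin 2 → k)) : Set (Fin 2 → k) :=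
  {p | ∀ f : MvPolynomial (Fin 2) k, (∀ q ∈ S, eval q f = 0) → eval p f = 0}

theorem stmt19 {k : Type*} [Field k] [IsAlgClosed k] [CharZero k]
    (a b : kˣ)
    (ha : ∀ m : ℕ, 0 < m → a ^ m ≠ 1) (hb : ∀ m : ℕ, 0 < m → b ^ m ≠ 1)
    (r₁ r₂ : ℕ) (hr₁ : 0 < r₁) (hr₂ : 0 < r₂)
    -- ((r₁, r₂) generates the subgroup {(m, n) ∈ ℤ² : aᵐ = bⁿ} of ℤ², which is in
    -- particular nontrivial)
    (hgen : ∀ m n : ℤ, a ^ m = b ^ n ↔ ∃ t : ℤ, m = t * (r₁ : ℤ) ∧ n = t * (r₂ : ℤ))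
    (x₀ y₀ : k) (hx₀y₀ : x₀ * y₀ ≠ 0) :
    zariskiClosure {q : Fin 2 → k | ∃ n : ℕ, q = ![(a : k) ^ n * x₀, (b : k) ^ n * y₀]} =
      {p : Fin 2 → k | y₀ ^ r₂ * (p 0) ^ r₁ - x₀ ^ r₁ * (p 1) ^ r₂ = 0} := by
  have hx₀ : x₀ ≠ 0 := left_ne_zero_of_mul hx₀y₀
  have hy₀ : y₀ ≠ 0 := right_ne_zero_of_mul hx₀y₀
  set d := Nat.gcd r₁ r₂ with hd_def
  have hd : 0 < d := Nat.gcd_pos_of_pos_left r₂ hr₁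
  haveI : NeZero d := ⟨hd.ne'⟩
  set r₁' := r₁ / d with hr₁'def
  set r₂' := r₂ / d with hr₂'def
  have hdr₁ : d * r₁' = r₁ := Nat.mul_div_cancel' (Nat.gcd_dvd_left r₁ r₂)
  have hdr₂ : d * r₂' = r₂ := Nat.mul_div_cancel' (Nat.gcd_dvd_right r₁ r₂)
  have hr₁'pos : 0 < r₁' := by
    rcases Nat.eq_zero_or_pos r₁' with h | h
    · rw [h, mul_zero] at hdr₁; omega
    · exact h
  have hr₂'pos : 0 < r₂' := by
    rcases Nat.eq_zero_or_pos r₂' with h | h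
    · rw [h, mul_zero] at hdr₂; omega
    · exact h
  have hcop : Nat.Coprime r₁' r₂' := Nat.coprime_div_gcd_div_gcd hd
  have hab : a ^ (r₁ : ℤ) = b ^ (r₂ : ℤ) :=
    (hgen r₁ r₂).mpr ⟨1, (one_mul _).symm, (one_mul _).symm⟩
  have habn : a ^ r₁ = b ^ r₂ := by
    rw [← zpow_natCast a, ← zpow_natCast b]; exact hab
  have habk : (a : k) ^ r₁ = (b : k) ^ r₂ := by exact_mod_cast congrArg Units.val habn
  have hainj : Function.Injective (fun n : ℕ => a ^ n) := by
    rw [injective_pow_iff_not_isOfFinOrder, isOfFinOrder_iff_pow_eq_one]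
    rintro ⟨n, hn, hn1⟩
    exact ha n hn hn1
  have hainjk : ∀ m n : ℕ, (a : k) ^ m = (a : k) ^ n → m = n := by
    intro m n hmn
    exact hainj (Units.ext (by push_cast; exact hmn))
  set ω : kˣ := a ^ r₁' * (b ^ r₂')⁻¹ with hω_def
  have hωl : ∀ l : ℕ, ω ^ l = 1 ↔ d ∣ l := by
    intro l
    have h1 : ω ^ l = a ^ (r₁' * l) * (b ^ (r₂' * l))⁻¹ := by
      rw [hω_def, mul_pow, inv_pow, pow_mul, pow_mul]
    rw [h1, mul_inv_eq_one]
    constructor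
    · intro hl
      obtain ⟨t, ht1, ht2⟩ := (hgen ((r₁' * l : ℕ) : ℤ) ((r₂' * l : ℕ) : ℤ)).mp
        (by rw [zpow_natCast, zpow_natCast]; exact hl)
      have hr₁z : (r₁ : ℤ) = (d : ℤ) * (r₁' : ℤ) := by exact_mod_cast hdr₁.symm
      rw [hr₁z] at ht1
      push_cast at ht1
      have hl' : (l : ℤ) = t * d := by
        have h2 : (l : ℤ) * r₁' = t * d * r₁' := by linarith
        exact mul_right_cancel₀ (by exact_mod_cast hr₁'pos.ne') h2
      have hdvd : (d : ℤ) ∣ (l : ℤ) := ⟨t, by linarith⟩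
      exact_mod_cast hdvd
    · rintro ⟨m, rfl⟩
      rw [show r₁' * (d * m) = r₁ * m by rw [← hdr₁]; ring,
          show r₂' * (d * m) = r₂ * m by rw [← hdr₂]; ring,
          pow_mul, pow_mul, habn]
  have hωprim : IsPrimitiveRoot ω d := ⟨(hωl d).mpr dvd_rfl, fun l hl => (hωl l).mp hl⟩
  have hωkprim : IsPrimitiveRoot ((ω : k)) d := IsPrimitiveRoot.coe_units_iff.mpr hωprim
  have hωkd : (ω : k) ^ d = 1 := hωkprim.pow_eq_one
  have hωk : (ω : k) = (a : k) ^ r₁' * ((b : k) ^ r₂')⁻¹ := by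
    rw [hω_def]; push_cast; ring
  -- the key density lemma
  have key : ∀ g : MvPolynomial (Fin 2) k,
      (∀ n : ℕ, eval ![(a : k) ^ n * x₀, (b : k) ^ n * y₀] g = 0) →
      ∀ (c₀ c₁ : k), c₀ ≠ 0 → ∀ n₀ : ℕ,
      (∀ j : ℕ, ∃ s : k, c₀ * s ^ r₂' = (a : k) ^ (n₀ + j * d) * x₀ ∧
        c₁ * s ^ r₁' = (b : k) ^ (n₀ + j * d) * y₀) →
      (MvPolynomial.aeval
        ![Polynomial.C c₀ * Polynomial.X ^ r₂', Polynomial.C c₁ * Polynomial.X ^ r₁'] g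
        : Polynomial k) = 0 := by
    intro g hg c₀ c₁ hc₀ n₀ hs
    choose s hs1 hs2 using hs
    apply Polynomial.eq_zero_of_infinite_isRoot
    apply Set.infinite_of_injective_forall_mem (f := s)
    · intro i j hij
      have h1 : (a : k) ^ (n₀ + i * d) * x₀ = (a : k) ^ (n₀ + j * d) * x₀ := by
        rw [← hs1 i, ← hs1 j, hij]
      have h2 := hainjk _ _ (mul_right_cancel₀ hx₀ h1)
      have h3 : i * d = j * d := by omega
      exact Nat.eq_of_mul_eq_mul_right hd h3
    · intro j
      show Polynomial.IsRoot _ (s j)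
      rw [Polynomial.IsRoot, evalAeval']
      have hv : (fun i => Polynomial.eval (s j)
          (![Polynomial.C c₀ * Polynomial.X ^ r₂', Polynomial.C c₁ * Polynomial.X ^ r₁'] i))
          = ![(a : k) ^ (n₀ + j * d) * x₀, (b : k) ^ (n₀ + j * d) * y₀] := by
        funext i
        fin_cases i <;> simp [hs1 j, hs2 j]
      rw [hv]
      exact hg _
  ext p
  simp only [zariskiClosure, Set.mem_setOf_eq]
  constructor
  · intro hp
    have h0 := hp (C (y₀ ^ r₂) * X 0 ^ r₁ - C (x₀ ^ r₁) * X 1 ^ r₂) ?_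
    · simpa using h0
    · rintro q ⟨n, rfl⟩
      have hqn : ((a : k) ^ n) ^ r₁ = ((b : k) ^ n) ^ r₂ := by
        rw [← pow_mul, ← pow_mul, mul_comm n r₁, mul_comm n r₂, pow_mul, pow_mul, habk]
      simp only [map_sub, map_mul, map_pow, eval_C, eval_X, Matrix.cons_val_zero,
        Matrix.cons_val_one, Matrix.head_cons]
      rw [mul_pow, mul_pow]
      linear_combination x₀ ^ r₁ * y₀ ^ r₂ * hqn
  · intro hp g hg
    have hg' : ∀ n : ℕ, eval ![(a : k) ^ n * x₀, (b : k) ^ n * y₀] g = 0 :=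
      fun n => hg _ ⟨n, rfl⟩
    have hcurve : y₀ ^ r₂ * p 0 ^ r₁ = x₀ ^ r₁ * p 1 ^ r₂ := sub_eq_zero.mp hp
    by_cases hp0 : p 0 = 0
    · -- the origin
      have hp1 : p 1 = 0 := by
        have h0 : x₀ ^ r₁ * p 1 ^ r₂ = 0 := by
          rw [← hcurve, hp0, zero_pow hr₁.ne', mul_zero]
        rcases mul_eq_zero.mp h0 with h | h
        · exact absurd h (pow_ne_zero _ hx₀)
        · exact pow_eq_zero_iff hr₂.ne' |>.mp h
      have hG := key g hg' x₀ y₀ hx₀ 0 ?_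
      · calc eval p g
            = Polynomial.eval 0 (MvPolynomial.aeval
              ![Polynomial.C x₀ * Polynomial.X ^ r₂',
                Polynomial.C y₀ * Polynomial.X ^ r₁'] g) := by
              have hfun : (fun i => Polynomial.eval 0
                  (![Polynomial.C x₀ * Polynomial.X ^ r₂',
                    Polynomial.C y₀ * Polynomial.X ^ r₁'] i)) = p := by
                funext i
                fin_cases i <;>
                  simp [hp0, hp1, zero_pow hr₂'pos.ne', zero_pow hr₁'pos.ne']
              rw [evalAeval', hfun]
          _ = 0 := by rw [hG, Polynomial.eval_zero]
      · intro j
        have hA : (a : k) ^ (j * d) ≠ 0 := pow_ne_zero _ (Units.ne_zero a)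
        have hB : (b : k) ^ (j * d) ≠ 0 := pow_ne_zero _ (Units.ne_zero b)
        have hAB : ((a : k) ^ (j * d)) ^ r₁' = ((b : k) ^ (j * d)) ^ r₂' := by
          rw [← pow_mul, ← pow_mul,
            show j * d * r₁' = r₁ * j by rw [mul_assoc, hdr₁, mul_comm],
            show j * d * r₂' = r₂ * j by rw [mul_assoc, hdr₂, mul_comm],
            pow_mul, pow_mul, habk]
        obtain ⟨s, hsA, hsB⟩ := exists_root' hcop hA hB hAB
        exact ⟨s, by rw [hsA, zero_add, mul_comm], by rw [hsB, zero_add, mul_comm]⟩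
    · -- generic point
      have hp1 : p 1 ≠ 0 := by
        intro h
        apply hp0
        have h0 : y₀ ^ r₂ * p 0 ^ r₁ = 0 := by
          rw [hcurve, h, zero_pow hr₂.ne', mul_zero]
        rcases mul_eq_zero.mp h0 with h' | h'
        · exact absurd h' (pow_ne_zero _ hy₀)
        · exact pow_eq_zero_iff hr₁.ne' |>.mp h'
      set ζk : k := (p 0 ^ r₁' * y₀ ^ r₂') / (x₀ ^ r₁' * p 1 ^ r₂') with hζ_def
      have hζd : ζk ^ d = 1 := by
        rw [hζ_def, div_pow, mul_pow, mul_pow, ← pow_mul, ← pow_mul, ← pow_mul, ← pow_mul,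
          show r₁' * d = r₁ by rw [mul_comm]; exact hdr₁,
          show r₂' * d = r₂ by rw [mul_comm]; exact hdr₂,
          div_eq_one_iff_eq (mul_ne_zero (pow_ne_zero _ hx₀) (pow_ne_zero _ hp1))]
        linear_combination hcurve
      obtain ⟨n₀, hn₀lt, hn₀⟩ := hωkprim.eq_pow_of_pow_eq_one hζd
      have hG := key g hg' (p 0) (p 1) hp0 n₀ ?_
      · calc eval p g
            = Polynomial.eval 1 (MvPolynomial.aeval
              ![Polynomial.C (p 0) * Polynomial.X ^ r₂',
                Polynomial.C (p 1) * Polynomial.X ^ r₁'] g) := by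
              have hfun : (fun i => Polynomial.eval 1
                  (![Polynomial.C (p 0) * Polynomial.X ^ r₂',
                    Polynomial.C (p 1) * Polynomial.X ^ r₁'] i)) = p := by
                funext i
                fin_cases i <;> simp
              rw [evalAeval', hfun]
          _ = 0 := by rw [hG, Polynomial.eval_zero]
      · intro j
        set n := n₀ + j * d with hn_def
        have hωn : (ω : k) ^ n = ζk := by
          rw [hn_def, pow_add,
            show (ω : k) ^ (j * d) = ((ω : k) ^ d) ^ j by rw [← pow_mul, mul_comm],
            hωkd, one_pow, mul_one, hn₀]
        have hA : (a : k) ^ n * x₀ / p 0 ≠ 0 :=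
          div_ne_zero (mul_ne_zero (pow_ne_zero _ (Units.ne_zero a)) hx₀) hp0
        have hB : (b : k) ^ n * y₀ / p 1 ≠ 0 :=
          div_ne_zero (mul_ne_zero (pow_ne_zero _ (Units.ne_zero b)) hy₀) hp1
        have hAB : ((a : k) ^ n * x₀ / p 0) ^ r₁' = ((b : k) ^ n * y₀ / p 1) ^ r₂' := by
          have hrel : ((a : k) ^ r₁' * ((b : k) ^ r₂')⁻¹) ^ n = ζk := by
            rw [← hωk]; exact hωn
          rw [hζ_def] at hrel
          rw [div_pow, div_pow, div_eq_div_iff (pow_ne_zero _ hp0) (pow_ne_zero _ hp1)]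
          rw [mul_pow, inv_pow, eq_div_iff (mul_ne_zero (pow_ne_zero _ hx₀) (pow_ne_zero _ hp1))] at hrel
          have hinv : ((b : k) ^ r₂') ^ n * (((b : k) ^ r₂') ^ n)⁻¹ = 1 :=
            mul_inv_cancel₀ (pow_ne_zero _ (pow_ne_zero _ (Units.ne_zero b)))
          linear_combination ((b : k) ^ r₂') ^ n * hrel
            - ((a : k) ^ r₁') ^ n * (x₀ ^ r₁' * p 1 ^ r₂') * hinv
        obtain ⟨s, hsA, hsB⟩ := exists_root' hcop hA hB hAB
        refine ⟨s, ?_, ?_⟩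
        · rw [hsA, mul_div_cancel₀ _ hp0]
        · rw [hsB, mul_div_cancel₀ _ hp1]
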